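/- arXiv:2001.01154 — 2 statements merged into one kernel-verified Lean document; each statement's English description precedes it below -/
import Mathlib

section
/- Existence of angles under a lower curvature bound (Lemma 3.1, curvature ≥ 0 case). Let X be a metric space, let U ⊆ X be a region of curvature ≥ 0, and let γ : [0,T] → X and η : [0,S] → X be unit-speed geodesics with γ(0) = η(0) whose images are contained in U. Then the angle between γ and η exists, i.e. ∠⁺(γ, η) = ∠⁻(γ, η), and its value equals lim_{t→0⁺} ∠⁰_{γ(0)}(γ(t), η(t)). -/
open Filter Topology Metric Set

noncomputable section

/-- `γ` is a unit-speed geodesic (shortest path) on the interval `[0, T]`: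
the distance between any two of its points equals the parameter difference. -/
def IsUnitSpeedGeodesicOn {X : Type*} [MetricSpace X] (γ : ℝ → X) (T : ℝ) : Prop :=
  ∀ t ∈ Set.Icc (0:ℝ) T, ∀ t' ∈ Set.Icc (0:ℝ) T, dist (γ t) (γ t') = |t - t'|

/-- The Euclidean comparison angle `∠⁰_p(x, y)` at the vertex `p`. -/
def compAngle {X : Type*} [MetricSpace X] (p x y : X) : ℝ :=
  Real.arccos ((dist p x ^ 2 + dist p y ^ 2 - dist x y ^ 2) /
    (2 * dist p x * dist p y))

/-- The upper angle `∠⁺(γ, η)` between two geodesics with `γ 0 = η 0`: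
the limsup of comparison angles `∠⁰_{γ 0}(γ t, η s)` as `(t, s) → (0⁺, 0⁺)`. -/
def upperAngle {X : Type*} [MetricSpace X] (γ η : ℝ → X) : ℝ :=
  Filter.limsup (fun ts : ℝ × ℝ => compAngle (γ 0) (γ ts.1) (η ts.2))
    ((𝓝[>] (0:ℝ)) ×ˢ (𝓝[>] (0:ℝ)))

/-- The lower angle `∠⁻(γ, η)`: liminf of comparison angles. -/
def lowerAngle {X : Type*} [MetricSpace X] (γ η : ℝ → X) : ℝ :=
  Filter.liminf (fun ts : ℝ × ℝ => compAngle (γ 0) (γ ts.1) (η ts.2))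
    ((𝓝[>] (0:ℝ)) ×ˢ (𝓝[>] (0:ℝ)))

/-- `U` is a region of curvature bounded by `0` in the comparison sense, where
`rel` is `≤` (curvature `≤ 0`) or `≥` (curvature `≥ 0`): any two points of `U`
are joined by a unit-speed shortest path with image in `U`, and for every
geodesic triangle contained in `U` and every Euclidean comparison triangle,
distances between pairs of points on the sides are related by `rel` to the
distances between the corresponding comparison points. -/
def IsCurvRegion {X : Type*} [MetricSpace X] (rel : ℝ → ℝ → Prop) (U : Set X) : Prop :=
  (∀ x ∈ U, ∀ y ∈ U, ∃ γ : ℝ → X, IsUnitSpeedGeodesicOn γ (dist x y) ∧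
    γ 0 = x ∧ γ (dist x y) = y ∧ ∀ t ∈ Set.Icc (0:ℝ) (dist x y), γ t ∈ U) ∧
  (∀ x ∈ U, ∀ y ∈ U, ∀ z ∈ U, ∀ p : Fin 3 → ℝ → X,
    (∀ i, IsUnitSpeedGeodesicOn (p i) (![dist x y, dist x z, dist y z] i) ∧
      p i 0 = (![(x, y), (x, z), (y, z)] i).1 ∧
      p i (![dist x y, dist x z, dist y z] i) = (![(x, y), (x, z), (y, z)] i).2 ∧
      ∀ t ∈ Set.Icc (0:ℝ) (![dist x y, dist x z, dist y z] i), p i t ∈ U) →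
    ∀ xb yb zb : EuclideanSpace ℝ (Fin 2),
      dist xb yb = dist x y → dist xb zb = dist x z → dist yb zb = dist y z →
      ∀ i j : Fin 3, ∀ a b : ℝ,
        a ∈ Set.Icc (0:ℝ) (![dist x y, dist x z, dist y z] i) →
        b ∈ Set.Icc (0:ℝ) (![dist x y, dist x z, dist y z] j) →
        rel (dist (p i a) (p j b))
          (dist
            (![fun c : ℝ => AffineMap.lineMap xb yb (c / dist x y),
               fun c : ℝ => AffineMap.lineMap xb zb (c / dist x z),
               fun c : ℝ => AffineMap.lineMap yb zb (c / dist y z)] i a)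
            (![fun c : ℝ => AffineMap.lineMap xb yb (c / dist x y),
               fun c : ℝ => AffineMap.lineMap xb zb (c / dist x z),
               fun c : ℝ => AffineMap.lineMap yb zb (c / dist y z)] j b)))

/-- A region of curvature `≤ 0`. -/
def IsCurvLeRegion {X : Type*} [MetricSpace X] (U : Set X) : Prop :=
  IsCurvRegion (· ≤ ·) U

/-- A region of curvature `≥ 0`. -/
def IsCurvGeRegion {X : Type*} [MetricSpace X] (U : Set X) : Prop :=
  IsCurvRegion (· ≥ ·) U

end
noncomputable section
namespace AngleAux

lemma arccos_antitone : Antitone Real.arccos := fun x y h => by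
  simp only [Real.arccos_eq_pi_div_two_sub_arcsin]
  linarith [Real.monotone_arcsin h]

def V (a b : ℝ) : EuclideanSpace ℝ (Fin 2) := (WithLp.equiv 2 _).symm ![a, b]

lemma dist_V (a b c d : ℝ) :
    dist (V a b) (V c d) = Real.sqrt ((a - c) ^ 2 + (b - d) ^ 2) := by
  rw [EuclideanSpace.dist_eq]
  simp [V, Fin.sum_univ_two, Real.dist_eq, sq_abs]

lemma lineMap_V (a b c d r : ℝ) :
    AffineMap.lineMap (V a b) (V c d) r = V (a + r * (c - a)) (b + r * (d - b)) := by
  simp only [AffineMap.lineMap_apply, V]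
  ext i
  fin_cases i <;>
    simp [WithLp.equiv_symm_apply, PiLp.toLp_apply, PiLp.add_apply, PiLp.smul_apply, PiLp.sub_apply] <;> ring

lemma compAngle_comm {X : Type*} [MetricSpace X] (p x y : X) :
    compAngle p x y = compAngle p y x := by
  unfold compAngle
  rw [dist_comm x y]
  ring_nf

lemma compAngle_mono {X : Type*} [MetricSpace X]
    {U : Set X} (hU : IsCurvGeRegion U)
    {T S : ℝ} {γ η : ℝ → X}
    (hγ : IsUnitSpeedGeodesicOn γ T) (hη : IsUnitSpeedGeodesicOn η S)
    (hγη : γ 0 = η 0)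
    (hγU : ∀ t ∈ Set.Icc (0:ℝ) T, γ t ∈ U)
    (hηU : ∀ s ∈ Set.Icc (0:ℝ) S, η s ∈ U)
    {t t' s : ℝ} (ht : 0 < t) (htt' : t ≤ t') (ht'T : t' ≤ T)
    (hs : 0 < s) (hsS : s ≤ S) :
    compAngle (γ 0) (γ t') (η s) ≤ compAngle (γ 0) (γ t) (η s) := by
  have ht' : 0 < t' := lt_of_lt_of_le ht htt'
  have hT0 : (0:ℝ) ≤ T := le_trans ht'.le ht'T
  have hS0 : (0:ℝ) ≤ S := le_trans hs.le hsS
  have h0T : (0:ℝ) ∈ Set.Icc (0:ℝ) T := ⟨le_refl _, hT0⟩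
  have h0S : (0:ℝ) ∈ Set.Icc (0:ℝ) S := ⟨le_refl _, hS0⟩
  have htm : t ∈ Set.Icc (0:ℝ) T := ⟨ht.le, le_trans htt' ht'T⟩
  have ht'm : t' ∈ Set.Icc (0:ℝ) T := ⟨ht'.le, ht'T⟩
  have hsm : s ∈ Set.Icc (0:ℝ) S := ⟨hs.le, hsS⟩
  have dγ : ∀ u ∈ Set.Icc (0:ℝ) T, dist (γ 0) (γ u) = u := by
    intro u hu
    rw [hγ 0 h0T u hu, zero_sub, abs_neg, abs_of_nonneg hu.1]
  have dη : ∀ u ∈ Set.Icc (0:ℝ) S, dist (γ 0) (η u) = u := by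
    intro u hu
    rw [hγη, hη 0 h0S u hu, zero_sub, abs_neg, abs_of_nonneg hu.1]
  set x := γ 0 with hx
  set y := γ t' with hy
  set z := η s with hz
  have hdxy : dist x y = t' := dγ t' ht'm
  have hdxz : dist x z = s := dη s hsm
  set d := dist y z with hd
  have hd0 : 0 ≤ d := dist_nonneg
  have htri1 : d ≤ t' + s := by
    calc d ≤ dist y x + dist x z := dist_triangle y x z
    _ = t' + s := by rw [dist_comm y x, hdxy, hdxz]
  have htri2 : t' ≤ s + d := by
    calc t' = dist x y := hdxy.symm
    _ ≤ dist x z + dist z y := dist_triangle x z y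
    _ = s + d := by rw [hdxz, dist_comm z y]
  have htri3 : s ≤ t' + d := by
    calc s = dist x z := hdxz.symm
    _ ≤ dist x y + dist y z := dist_triangle x y z
    _ = t' + d := by rw [hdxy]
  set c := (t' ^ 2 + s ^ 2 - d ^ 2) / (2 * t' * s) with hc
  have h2ts : (0:ℝ) < 2 * t' * s := by positivity
  have hc1 : c ≤ 1 := by
    rw [hc, div_le_one h2ts]
    nlinarith [sq_nonneg (t' - s - d), sq_nonneg (t' - s + d)]
  have hc2 : -1 ≤ c := by
    rw [hc, le_div_iff₀ h2ts]
    nlinarith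
  have h1c : (0:ℝ) ≤ 1 - c ^ 2 := by nlinarith
  set sq1c := Real.sqrt (1 - c ^ 2) with hsq
  have hsq1c : sq1c ^ 2 = 1 - c ^ 2 := Real.sq_sqrt h1c
  set xb := V 0 0 with hxb
  set yb := V t' 0 with hyb
  set zb := V (s * c) (s * sq1c) with hzb
  have hxy : dist xb yb = dist x y := by
    rw [hdxy, dist_V, show ((0:ℝ) - t') ^ 2 + ((0:ℝ) - 0) ^ 2 = t' ^ 2 by ring,
      Real.sqrt_sq ht'.le]
  have hxz : dist xb zb = dist x z := by
    rw [hdxz, dist_V, show ((0:ℝ) - s * c) ^ 2 + ((0:ℝ) - s * sq1c) ^ 2 = s ^ 2 by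
      linear_combination s ^ 2 * hsq1c, Real.sqrt_sq hs.le]
  have hcmul : c * (2 * t' * s) = t' ^ 2 + s ^ 2 - d ^ 2 := by
    rw [hc]; field_simp
  have hyz : dist yb zb = dist y z := by
    rw [← hd, dist_V, show (t' - s * c) ^ 2 + ((0:ℝ) - s * sq1c) ^ 2 = d ^ 2 by
      linear_combination s ^ 2 * hsq1c - hcmul, Real.sqrt_sq hd0]
  obtain ⟨σ, hσgeo, hσ0, hσd, hσU⟩ := hU.1 y (hγU t' ht'm) z (hηU s hsm)
  set pmap : Fin 3 → ℝ → X := ![γ, η, σ] with hpmap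
  have Hp : ∀ i, IsUnitSpeedGeodesicOn (pmap i) (![dist x y, dist x z, dist y z] i) ∧
      pmap i 0 = (![(x, y), (x, z), (y, z)] i).1 ∧
      pmap i (![dist x y, dist x z, dist y z] i) = (![(x, y), (x, z), (y, z)] i).2 ∧
      ∀ u ∈ Set.Icc (0:ℝ) (![dist x y, dist x z, dist y z] i), pmap i u ∈ U := by
    intro i
    fin_cases i
    · refine ⟨?_, rfl, ?_, ?_⟩
      · show IsUnitSpeedGeodesicOn γ (dist x y)
        rw [hdxy]
        exact fun u hu v hv => hγ u ⟨hu.1, hu.2.trans ht'T⟩ v ⟨hv.1, hv.2.trans ht'T⟩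
      · show γ (dist x y) = y
        rw [hdxy]
      · show ∀ u ∈ Set.Icc (0:ℝ) (dist x y), γ u ∈ U
        rw [hdxy]
        exact fun u hu => hγU u ⟨hu.1, hu.2.trans ht'T⟩
    · refine ⟨?_, hγη.symm, ?_, ?_⟩
      · show IsUnitSpeedGeodesicOn η (dist x z)
        rw [hdxz]
        exact fun u hu v hv => hη u ⟨hu.1, hu.2.trans hsS⟩ v ⟨hv.1, hv.2.trans hsS⟩
      · show η (dist x z) = z
        rw [hdxz]
      · show ∀ u ∈ Set.Icc (0:ℝ) (dist x z), η u ∈ U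
        rw [hdxz]
        exact fun u hu => hηU u ⟨hu.1, hu.2.trans hsS⟩
    · exact ⟨hσgeo, hσ0, hσd, hσU⟩
  have mem0 : t ∈ Set.Icc (0:ℝ) (![dist x y, dist x z, dist y z] 0) := by
    show t ∈ Set.Icc (0:ℝ) (dist x y)
    rw [hdxy]; exact ⟨ht.le, htt'⟩
  have mem1 : s ∈ Set.Icc (0:ℝ) (![dist x y, dist x z, dist y z] 1) := by
    show s ∈ Set.Icc (0:ℝ) (dist x z)
    rw [hdxz]; exact ⟨hs.le, le_refl s⟩
  have key := hU.2 x (hγU 0 h0T) y (hγU t' ht'm) z (hηU s hsm) pmap Hp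
    xb yb zb hxy hxz hyz 0 1 t s mem0 mem1
  have key' : dist (AffineMap.lineMap xb yb (t / dist x y))
      (AffineMap.lineMap xb zb (s / dist x z)) ≤ dist (γ t) (η s) := key
  rw [hdxy, hdxz, hxb, hyb, hzb, lineMap_V, lineMap_V,
    show (0:ℝ) + t / t' * (t' - 0) = t by field_simp; ring,
    show (0:ℝ) + t / t' * (0 - 0) = 0 by ring,
    show (0:ℝ) + s / s * (s * c - 0) = s * c by field_simp; ring,
    show (0:ℝ) + s / s * (s * sq1c - 0) = s * sq1c by field_simp; ring,
    dist_V] at key'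
  set dts := dist (γ t) (η s) with hdts
  have hE : (t - s * c) ^ 2 + ((0:ℝ) - s * sq1c) ^ 2 = t ^ 2 + s ^ 2 - 2 * t * s * c := by
    linear_combination s ^ 2 * hsq1c
  have hE0 : (0:ℝ) ≤ t ^ 2 + s ^ 2 - 2 * t * s * c := by rw [← hE]; positivity
  have hsqle : t ^ 2 + s ^ 2 - 2 * t * s * c ≤ dts ^ 2 := by
    have h1 : Real.sqrt (t ^ 2 + s ^ 2 - 2 * t * s * c) ≤ dts := by rw [← hE]; exact key'
    have h2 := pow_le_pow_left₀ (Real.sqrt_nonneg _) h1 2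
    rwa [Real.sq_sqrt hE0] at h2
  have hdxt : dist x (γ t) = t := dγ t htm
  have hdtz : dist (γ t) z = dts := rfl
  have h2ts' : (0:ℝ) < 2 * t * s := by positivity
  have hqc : (t ^ 2 + s ^ 2 - dts ^ 2) / (2 * t * s) ≤ c := by
    rw [div_le_iff₀ h2ts']
    nlinarith
  have e1 : compAngle x y z = Real.arccos c := by
    unfold compAngle
    rw [hdxy, hdxz, ← hd, hc]
  have e2 : compAngle x (γ t) z = Real.arccos ((t ^ 2 + s ^ 2 - dts ^ 2) / (2 * t * s)) := by
    unfold compAngle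
    rw [hdxt, hdtz, hdxz]
  show compAngle x y z ≤ compAngle x (γ t) z
  rw [e1, e2]
  exact arccos_antitone hqc

end AngleAux
end

set_option maxHeartbeats 2000000 in
open AngleAux in
/-- Lemma 3.1, curvature `≥ 0` case: the angle between two geodesics exists
and equals the limit of the diagonal comparison angles. -/
theorem angle_exists_of_curvGe {X : Type*} [MetricSpace X]
    {U : Set X} (hU : IsCurvGeRegion U)
    {T S : ℝ} (hT : 0 < T) (hS : 0 < S)
    (γ η : ℝ → X)
    (hγ : IsUnitSpeedGeodesicOn γ T) (hη : IsUnitSpeedGeodesicOn η S)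
    (hγη : γ 0 = η 0)
    (hγU : ∀ t ∈ Set.Icc (0:ℝ) T, γ t ∈ U)
    (hηU : ∀ s ∈ Set.Icc (0:ℝ) S, η s ∈ U) :
    upperAngle γ η = lowerAngle γ η ∧
    Filter.Tendsto (fun t : ℝ => compAngle (γ 0) (γ t) (η t)) (𝓝[>] (0:ℝ))
      (𝓝 (upperAngle γ η)) := by
  have mono1 : ∀ {t t' s : ℝ}, 0 < t → t ≤ t' → t' ≤ T → 0 < s → s ≤ S →
      compAngle (γ 0) (γ t') (η s) ≤ compAngle (γ 0) (γ t) (η s) := by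
    intro t t' s ht htt' ht'T hs hsS
    exact compAngle_mono hU hγ hη hγη hγU hηU ht htt' ht'T hs hsS
  have mono2 : ∀ {t s s' : ℝ}, 0 < t → t ≤ T → 0 < s → s ≤ s' → s' ≤ S →
      compAngle (γ 0) (γ t) (η s') ≤ compAngle (γ 0) (γ t) (η s) := by
    intro t s s' ht htT hs hss' hs'S
    have h := compAngle_mono hU hη hγ hγη.symm hηU hγU hs hss' hs'S ht htT
    calc compAngle (γ 0) (γ t) (η s') = compAngle (η 0) (η s') (γ t) := by
          rw [compAngle_comm, hγη]
      _ ≤ compAngle (η 0) (η s) (γ t) := h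
      _ = compAngle (γ 0) (γ t) (η s) := by rw [compAngle_comm, hγη]
  set F : ℝ × ℝ → ℝ := fun ts => compAngle (γ 0) (γ ts.1) (η ts.2) with hF
  set A : Set ℝ := F '' (Set.Ioc 0 T ×ˢ Set.Ioc 0 S) with hA
  have hAne : A.Nonempty := ⟨F (T, S), ⟨(T, S), ⟨⟨hT, le_rfl⟩, ⟨hS, le_rfl⟩⟩, rfl⟩⟩
  have hAbdd : BddAbove A := by
    refine ⟨Real.pi, ?_⟩
    rintro r ⟨ts, -, rfl⟩
    exact Real.arccos_le_pi _
  set L := sSup A with hL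
  have key : Filter.Tendsto F ((𝓝[>] (0:ℝ)) ×ˢ (𝓝[>] (0:ℝ))) (𝓝 L) := by
    rw [Metric.tendsto_nhds]
    intro ε hε
    obtain ⟨a, ⟨⟨t₀, s₀⟩, ⟨ht₀, hs₀⟩, rfl⟩, ha⟩ :=
      exists_lt_of_lt_csSup hAne (show L - ε < L by linarith)
    filter_upwards [Filter.prod_mem_prod (Ioc_mem_nhdsGT ht₀.1)
      (Ioc_mem_nhdsGT hs₀.1)]
    rintro ⟨t, s⟩ ⟨htm, hsm⟩
    have h1 : F (t₀, s₀) ≤ F (t, s) := by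
      calc F (t₀, s₀) ≤ F (t₀, s) :=
            mono2 ht₀.1 ht₀.2 hsm.1 hsm.2 hs₀.2
        _ ≤ F (t, s) := mono1 htm.1 htm.2 ht₀.2 hsm.1 (hsm.2.trans hs₀.2)
    have h2 : F (t, s) ≤ L :=
      le_csSup hAbdd ⟨(t, s), ⟨⟨htm.1, htm.2.trans ht₀.2⟩, ⟨hsm.1, hsm.2.trans hs₀.2⟩⟩, rfl⟩
    rw [Real.dist_eq, abs_lt]
    constructor <;> linarith
  have hupper : upperAngle γ η = L := key.limsup_eq
  have hlower : lowerAngle γ η = L := key.liminf_eq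
  refine ⟨hupper.trans hlower.symm, ?_⟩
  rw [hupper]
  have hdiag : Filter.Tendsto (fun u : ℝ => ((u, u) : ℝ × ℝ)) (𝓝[>] (0:ℝ))
      ((𝓝[>] (0:ℝ)) ×ˢ (𝓝[>] (0:ℝ))) :=
    Filter.Tendsto.prodMk tendsto_id tendsto_id
  have key2 : Filter.Tendsto (fun u : ℝ => F (u, u)) (𝓝[>] (0:ℝ)) (𝓝 L) := key.comp hdiag
  simpa only [hF] using key2
end

section
/- Lower semicontinuity of angles under a lower curvature bound (Proposition 3.4, curvature ≥ 0 case). Let X be a proper metric space in which every pair of points is joined by a unit-speed shortest path and in which every point has a neighborhood that is a region of curvature ≥ 0. Let γₙ, γ : [0,T] → X and σₙ, σ : [0,S] → X (T, S > 0) be unit-speed geodesics with γₙ(0) = σₙ(0) for every n and γ(0) = σ(0), and suppose γₙ → γ uniformly on [0,T] and σₙ → σ uniformly on [0,S]. Then ∠⁺(γ, σ) ≤ liminf_{n→∞} ∠⁺(γₙ, σₙ). -/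
open Filter Topology Metric Set

noncomputable section AuxProof

open Real

private lemma arccos_anti' : Antitone Real.arccos :=
  fun _ _ h => sub_le_sub_left (Real.monotone_arcsin h) _

private def pt (a b : ℝ) : EuclideanSpace ℝ (Fin 2) :=
  (WithLp.equiv 2 (Fin 2 → ℝ)).symm ![a, b]

private lemma eucl_dist (a b c d : ℝ) :
    dist (pt a b) (pt c d) = Real.sqrt ((a - c)^2 + (b - d)^2) := by
  rw [EuclideanSpace.dist_eq, Fin.sum_univ_two]
  simp [pt, Real.dist_eq, sq_abs]

private lemma eucl_lineMap (a b c d r : ℝ) :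
    (AffineMap.lineMap (pt a b) (pt c d) : ℝ → EuclideanSpace ℝ (Fin 2)) r
      = pt (a + r * (c - a)) (b + r * (d - b)) := by
  ext i
  fin_cases i <;>
    · simp only [AffineMap.lineMap_apply, vsub_eq_sub, vadd_eq_add, PiLp.add_apply,
        PiLp.smul_apply, PiLp.sub_apply, smul_eq_mul]
      show _ * (pt c d _ - pt a b _) + pt a b _ = _
      simp [pt]; ring

private lemma euclid_comp (t' s e : ℝ) (ht' : 0 < t') (hs : 0 < s) (he0 : 0 ≤ e)
    (h1 : e ≤ t' + s) (h2 : |t' - s| ≤ e) :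
    ∃ xb yb zb : EuclideanSpace ℝ (Fin 2), dist xb yb = t' ∧ dist xb zb = s ∧
      dist yb zb = e ∧
      ∀ t : ℝ, dist ((AffineMap.lineMap xb yb : ℝ → _) (t / t')) zb ^ 2
        = t ^ 2 + s ^ 2 - 2 * t * s * ((t' ^ 2 + s ^ 2 - e ^ 2) / (2 * t' * s)) := by
  set D : ℝ := (t' ^ 2 + s ^ 2 - e ^ 2) / (2 * t' * s) with hD
  have h2ts : (0:ℝ) < 2 * t' * s := by positivity
  have hD1 : D ≤ 1 := by
    rw [div_le_one h2ts]
    nlinarith [abs_le.1 h2, sq_abs (t' - s), sq_nonneg (t' - s)]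
  have hDm1 : -1 ≤ D := by
    rw [le_div_iff₀ h2ts]; nlinarith
  have h1D : 0 ≤ 1 - D ^ 2 := by nlinarith
  have hsq := Real.sq_sqrt h1D
  have hsn := Real.sqrt_nonneg (1 - D ^ 2)
  refine ⟨pt 0 0, pt t' 0, pt (s * D) (s * Real.sqrt (1 - D ^ 2)), ?_, ?_, ?_, ?_⟩
  · rw [eucl_dist]
    have : (0 - t') ^ 2 + ((0:ℝ) - 0) ^ 2 = t' ^ 2 := by ring
    rw [this, Real.sqrt_sq ht'.le]
  · rw [eucl_dist]
    have : (0 - s * D) ^ 2 + (0 - s * Real.sqrt (1 - D ^ 2)) ^ 2 = s ^ 2 := by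
      linear_combination s ^ 2 * hsq
    rw [this, Real.sqrt_sq hs.le]
  · rw [eucl_dist]
    have h2tsD : 2 * t' * s * D = t' ^ 2 + s ^ 2 - e ^ 2 := by rw [hD]; field_simp
    have : (t' - s * D) ^ 2 + (0 - s * Real.sqrt (1 - D ^ 2)) ^ 2 = e ^ 2 := by
      linear_combination s ^ 2 * hsq - h2tsD
    rw [this, Real.sqrt_sq he0]
  · intro t
    rw [eucl_lineMap, eucl_dist]
    have ht : t / t' * (t' - 0) = t := by field_simp; ring
    rw [Real.sq_sqrt (by positivity)]
    rw [ht]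
    linear_combination s ^ 2 * hsq

private lemma compAngle_comm {X : Type*} [MetricSpace X] (p x y : X) :
    compAngle p x y = compAngle p y x := by
  unfold compAngle
  rw [dist_comm x y]
  ring_nf

private lemma compAngle_nonneg {X : Type*} [MetricSpace X] (p x y : X) :
    0 ≤ compAngle p x y :=
  Real.arccos_nonneg _

private lemma compAngle_le_pi {X : Type*} [MetricSpace X] (p x y : X) :
    compAngle p x y ≤ π :=
  Real.arccos_le_pi _

private lemma geo_restrict {X : Type*} [MetricSpace X] {γ : ℝ → X} {T T' : ℝ}
    (h : IsUnitSpeedGeodesicOn γ T) (hT' : T' ≤ T) : IsUnitSpeedGeodesicOn γ T' :=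
  fun t ht u hu => h t ⟨ht.1, ht.2.trans hT'⟩ u ⟨hu.1, hu.2.trans hT'⟩

private lemma geo_dist0 {X : Type*} [MetricSpace X] {γ : ℝ → X} {T : ℝ}
    (h : IsUnitSpeedGeodesicOn γ T) {t : ℝ} (ht : 0 ≤ t) (htT : t ≤ T) :
    dist (γ 0) (γ t) = t := by
  have := h 0 ⟨le_refl 0, ht.trans htT⟩ t ⟨ht, htT⟩
  rwa [zero_sub, abs_neg, abs_of_nonneg ht] at this

private lemma compAngle_geo {X : Type*} [MetricSpace X] {γ σ : ℝ → X} {T S t s : ℝ}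
    (hγ : IsUnitSpeedGeodesicOn γ T) (hσ : IsUnitSpeedGeodesicOn σ S)
    (h0 : γ 0 = σ 0) (ht : 0 ≤ t) (htT : t ≤ T) (hs : 0 ≤ s) (hsS : s ≤ S) :
    compAngle (γ 0) (γ t) (σ s)
      = Real.arccos ((t ^ 2 + s ^ 2 - dist (γ t) (σ s) ^ 2) / (2 * t * s)) := by
  unfold compAngle
  rw [geo_dist0 hγ ht htT, h0, geo_dist0 hσ hs hsS]

private lemma angle_mono {X : Type*} [MetricSpace X] {U : Set X} (hU : IsCurvGeRegion U)
    {γ σ : ℝ → X} {T S : ℝ} (hγ : IsUnitSpeedGeodesicOn γ T) (hσ : IsUnitSpeedGeodesicOn σ S)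
    (h0 : γ 0 = σ 0) {t t' s : ℝ} (ht : 0 < t) (htt' : t ≤ t') (ht'T : t' ≤ T)
    (hs : 0 < s) (hsS : s ≤ S)
    (hγU : ∀ u ∈ Icc (0:ℝ) t', γ u ∈ U) (hσU : ∀ u ∈ Icc (0:ℝ) s, σ u ∈ U) :
    compAngle (γ 0) (γ t') (σ s) ≤ compAngle (γ 0) (γ t) (σ s) := by
  have ht' : 0 < t' := ht.trans_le htt'
  have hdxy : dist (γ 0) (γ t') = t' := geo_dist0 hγ ht'.le ht'T
  have hdxz : dist (γ 0) (σ s) = s := by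
    rw [h0]; exact geo_dist0 hσ hs.le hsS
  have hdt : dist (γ 0) (γ t) = t := geo_dist0 hγ ht.le (htt'.trans ht'T)
  have he0 : (0:ℝ) ≤ dist (γ t') (σ s) := dist_nonneg
  have htri1 : dist (γ t') (σ s) ≤ t' + s := by
    calc dist (γ t') (σ s) ≤ dist (γ t') (γ 0) + dist (γ 0) (σ s) := dist_triangle _ _ _
    _ = t' + s := by rw [dist_comm (γ t') (γ 0), hdxy, hdxz]
  have htri2 : |t' - s| ≤ dist (γ t') (σ s) := by
    have := abs_dist_sub_le (γ t') (σ s) (γ 0)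
    rwa [dist_comm (γ t') (γ 0), dist_comm (σ s) (γ 0), hdxy, hdxz] at this
  obtain ⟨xb, yb, zb, hxy, hxz, hyz, hcomp⟩ :=
    euclid_comp t' s (dist (γ t') (σ s)) ht' hs he0 htri1 htri2
  have hxU : γ 0 ∈ U := hγU 0 ⟨le_refl 0, ht'.le⟩
  have hyU : γ t' ∈ U := hγU t' ⟨ht'.le, le_refl t'⟩
  have hzU : σ s ∈ U := hσU s ⟨hs.le, le_refl s⟩
  obtain ⟨g, hg, hg0, hge, hgU⟩ := hU.1 (γ t') hyU (σ s) hzU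
  have key := hU.2 (γ 0) hxU (γ t') hyU (σ s) hzU ![γ, σ, g] ?_ xb yb zb
    (by rw [hxy, hdxy]) (by rw [hxz, hdxz]) (by rw [hyz])
    0 1 t s ?_ ?_
  · have key2 : dist ((AffineMap.lineMap xb yb : ℝ → _) (t / t')) zb ≤ dist (γ t) (σ s) := by
      have e1 : (![γ, σ, g] : Fin 3 → ℝ → X) 0 t = γ t := rfl
      have e2 : (![γ, σ, g] : Fin 3 → ℝ → X) 1 s = σ s := rfl
      rw [e1, e2] at key
      refine le_trans (le_of_eq ?_) key
      show dist _ _ = dist ((AffineMap.lineMap xb yb : ℝ → _) (t / dist (γ 0) (γ t')))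
        ((AffineMap.lineMap xb zb : ℝ → _) (s / dist (γ 0) (σ s)))
      rw [hdxy, hdxz, div_self hs.ne', AffineMap.lineMap_apply_one]
    have hsq : t ^ 2 + s ^ 2 -
        2 * t * s * ((t' ^ 2 + s ^ 2 - dist (γ t') (σ s) ^ 2) / (2 * t' * s))
        ≤ dist (γ t) (σ s) ^ 2 := by
      rw [← hcomp t]
      exact pow_le_pow_left₀ dist_nonneg key2 2
    unfold compAngle
    rw [hdxy, hdxz, hdt]
    apply arccos_anti'
    rw [div_le_iff₀ (by positivity)]
    calc t ^ 2 + s ^ 2 - dist (γ t) (σ s) ^ 2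
        ≤ 2 * t * s * ((t' ^ 2 + s ^ 2 - dist (γ t') (σ s) ^ 2) / (2 * t' * s)) := by
          linarith [hsq]
      _ = (t' ^ 2 + s ^ 2 - dist (γ t') (σ s) ^ 2) / (2 * t' * s) * (2 * t * s) := by ring
  · intro i
    fin_cases i
    · refine ⟨?_, ?_, ?_, ?_⟩
      · show IsUnitSpeedGeodesicOn γ (dist (γ 0) (γ t'))
        rw [hdxy]; exact geo_restrict hγ ht'T
      · rfl
      · show γ (dist (γ 0) (γ t')) = γ t'
        rw [hdxy]
      · show ∀ u ∈ Icc (0:ℝ) (dist (γ 0) (γ t')), γ u ∈ U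
        intro u hu
        exact hγU u (hdxy ▸ hu)
    · refine ⟨?_, ?_, ?_, ?_⟩
      · show IsUnitSpeedGeodesicOn σ (dist (γ 0) (σ s))
        rw [hdxz]; exact geo_restrict hσ hsS
      · exact h0.symm
      · show σ (dist (γ 0) (σ s)) = σ s
        rw [hdxz]
      · show ∀ u ∈ Icc (0:ℝ) (dist (γ 0) (σ s)), σ u ∈ U
        intro u hu
        exact hσU u (hdxz ▸ hu)
    · exact ⟨hg, hg0, hge, hgU⟩
  · show t ∈ Icc (0:ℝ) (dist (γ 0) (γ t'))
    rw [hdxy]; exact ⟨ht.le, htt'⟩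
  · show s ∈ Icc (0:ℝ) (dist (γ 0) (σ s))
    rw [hdxz]; exact ⟨hs.le, le_refl s⟩

private lemma upperAngle_le_pi {X : Type*} [MetricSpace X] (γ η : ℝ → X) :
    upperAngle γ η ≤ π := by
  haveI : ((𝓝[>] (0:ℝ)) ×ˢ (𝓝[>] (0:ℝ))).NeBot :=
    Filter.prod_neBot.2 ⟨inferInstance, inferInstance⟩
  refine Filter.limsup_le_of_le ?_ ?_
  · exact IsBoundedUnder.isCoboundedUnder_le
      ⟨0, Filter.eventually_map.2 (Filter.Eventually.of_forall fun _ => compAngle_nonneg _ _ _)⟩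
  · exact Filter.Eventually.of_forall fun _ => compAngle_le_pi _ _ _

end AuxProof

/-- Proposition 3.4, curvature `≥ 0` case: lower semicontinuity of angles. -/
theorem angle_lower_semicontinuous_of_curvGe {X : Type*} [MetricSpace X]
    [ProperSpace X]
    (hgeo : ∀ x y : X, ∃ γ : ℝ → X, IsUnitSpeedGeodesicOn γ (dist x y) ∧
      γ 0 = x ∧ γ (dist x y) = y)
    (hcurv : ∀ p : X, ∃ U ∈ 𝓝 p, IsCurvGeRegion U)
    {T S : ℝ} (hT : 0 < T) (hS : 0 < S)
    (γn : ℕ → ℝ → X) (γ : ℝ → X) (σn : ℕ → ℝ → X) (σ : ℝ → X)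
    (hγn : ∀ n, IsUnitSpeedGeodesicOn (γn n) T)
    (hγ : IsUnitSpeedGeodesicOn γ T)
    (hσn : ∀ n, IsUnitSpeedGeodesicOn (σn n) S)
    (hσ : IsUnitSpeedGeodesicOn σ S)
    (h0n : ∀ n, γn n 0 = σn n 0) (h0 : γ 0 = σ 0)
    (hγconv : TendstoUniformlyOn (fun n u => γn n u) γ atTop (Set.Icc 0 T))
    (hσconv : TendstoUniformlyOn (fun n u => σn n u) σ atTop (Set.Icc 0 S)) :
    upperAngle γ σ
      ≤ Filter.liminf (fun n => upperAngle (γn n) (σn n)) atTop := by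
  haveI hFne : ((𝓝[>] (0:ℝ)) ×ˢ (𝓝[>] (0:ℝ))).NeBot :=
    Filter.prod_neBot.2 ⟨inferInstance, inferInstance⟩
  obtain ⟨U, hUnhds, hU⟩ := hcurv (γ 0)
  obtain ⟨ε, hεpos, hball⟩ := Metric.mem_nhds_iff.1 hUnhds
  set ε₀ := min (min (ε/4) T) S with hε₀def
  have hε₀pos : 0 < ε₀ := lt_min (lt_min (by linarith) hT) hS
  have hε₀ε : ε₀ ≤ ε/4 := le_trans (min_le_left _ _) (min_le_left _ _)
  have hε₀T : ε₀ ≤ T := le_trans (min_le_left _ _) (min_le_right _ _)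
  have hε₀S : ε₀ ≤ S := min_le_right _ _
  refine Filter.limsup_le_of_le ?_ ?_
  · exact Filter.IsBoundedUnder.isCoboundedUnder_le
      ⟨0, Filter.eventually_map.2 (Filter.Eventually.of_forall fun _ => compAngle_nonneg _ _ _)⟩
  · filter_upwards [Filter.prod_mem_prod (Ioc_mem_nhdsGT_of_mem ⟨le_refl (0:ℝ), hε₀pos⟩)
      (Ioc_mem_nhdsGT_of_mem ⟨le_refl (0:ℝ), hε₀pos⟩)] with ts hts
    obtain ⟨⟨ht0, htε⟩, hs0, hsε⟩ := hts
    have htT : ts.1 ≤ T := htε.trans hε₀T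
    have hsS : ts.2 ≤ S := hsε.trans hε₀S
    have hγt : Tendsto (fun n => γn n ts.1) atTop (𝓝 (γ ts.1)) :=
      hγconv.tendsto_at ⟨ht0.le, htT⟩
    have hσs : Tendsto (fun n => σn n ts.2) atTop (𝓝 (σ ts.2)) :=
      hσconv.tendsto_at ⟨hs0.le, hsS⟩
    have hd : Tendsto (fun n => dist (γn n ts.1) (σn n ts.2)) atTop
        (𝓝 (dist (γ ts.1) (σ ts.2))) := hγt.dist hσs
    have harg : Tendsto
        (fun n => (ts.1 ^ 2 + ts.2 ^ 2 - dist (γn n ts.1) (σn n ts.2) ^ 2) / (2 * ts.1 * ts.2))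
        atTop (𝓝 ((ts.1 ^ 2 + ts.2 ^ 2 - dist (γ ts.1) (σ ts.2) ^ 2) / (2 * ts.1 * ts.2))) :=
      (tendsto_const_nhds.sub (hd.pow 2)).div_const _
    have hfn : Tendsto (fun n => compAngle (γn n 0) (γn n ts.1) (σn n ts.2)) atTop
        (𝓝 (compAngle (γ 0) (γ ts.1) (σ ts.2))) := by
      rw [compAngle_geo hγ hσ h0 ht0.le htT hs0.le hsS]
      exact (Real.continuous_arccos.continuousAt.tendsto.comp harg).congr
        (fun n => (compAngle_geo (hγn n) (hσn n) (h0n n) ht0.le htT hs0.le hsS).symm)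
    have hγ00 : Tendsto (fun n => γn n 0) atTop (𝓝 (γ 0)) :=
      hγconv.tendsto_at ⟨le_refl 0, hT.le⟩
    have hev : ∀ᶠ n in atTop,
        compAngle (γn n 0) (γn n ts.1) (σn n ts.2) ≤ upperAngle (γn n) (σn n) := by
      filter_upwards [hγ00.eventually
        (Metric.ball_mem_nhds (γ 0) (by linarith : (0:ℝ) < ε/4))] with n hn
      have hmemγ : ∀ u ∈ Set.Icc (0:ℝ) ε₀, γn n u ∈ U := by
        intro u hu
        apply hball
        rw [Metric.mem_ball]
        have h1 : dist (γn n u) (γn n 0) = u := by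
          have := hγn n u ⟨hu.1, hu.2.trans hε₀T⟩ 0 ⟨le_refl 0, hT.le⟩
          rwa [sub_zero, abs_of_nonneg hu.1] at this
        calc dist (γn n u) (γ 0) ≤ dist (γn n u) (γn n 0) + dist (γn n 0) (γ 0) :=
            dist_triangle _ _ _
          _ < ε := by
            rw [h1]
            have := Metric.mem_ball.1 hn
            have := hu.2
            linarith [hε₀ε, hεpos]
      have hmemσ : ∀ u ∈ Set.Icc (0:ℝ) ε₀, σn n u ∈ U := by
        intro u hu
        apply hball
        rw [Metric.mem_ball]
        have h1 : dist (σn n u) (σn n 0) = u := by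
          have := hσn n u ⟨hu.1, hu.2.trans hε₀S⟩ 0 ⟨le_refl 0, hS.le⟩
          rwa [sub_zero, abs_of_nonneg hu.1] at this
        calc dist (σn n u) (γ 0) ≤ dist (σn n u) (σn n 0) + dist (σn n 0) (γ 0) :=
            dist_triangle _ _ _
          _ < ε := by
            rw [h1, ← h0n n]
            have := Metric.mem_ball.1 hn
            have := hu.2
            linarith [hε₀ε, hεpos]
      refine Filter.le_limsup_of_frequently_le ?_ ?_
      · refine Filter.Eventually.frequently ?_
        filter_upwards [Filter.prod_mem_prod (Ioc_mem_nhdsGT_of_mem ⟨le_refl (0:ℝ), ht0⟩)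
          (Ioc_mem_nhdsGT_of_mem ⟨le_refl (0:ℝ), hs0⟩)] with ab hab
        obtain ⟨⟨ha0, hat⟩, hb0, hbs⟩ := hab
        have step2 : compAngle (γn n 0) (γn n ts.1) (σn n ts.2)
            ≤ compAngle (γn n 0) (γn n ts.1) (σn n ab.2) := by
          have hmono := angle_mono hU (hσn n) (hγn n) (h0n n).symm hb0 hbs hsS ht0 htT
            (fun u hu => hmemσ u ⟨hu.1, hu.2.trans hsε⟩)
            (fun u hu => hmemγ u ⟨hu.1, hu.2.trans htε⟩)
          rw [← h0n n] at hmono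
          rw [compAngle_comm (γn n 0) (γn n ts.1) (σn n ts.2),
            compAngle_comm (γn n 0) (γn n ts.1) (σn n ab.2)]
          exact hmono
        have step1 : compAngle (γn n 0) (γn n ts.1) (σn n ab.2)
            ≤ compAngle (γn n 0) (γn n ab.1) (σn n ab.2) :=
          angle_mono hU (hγn n) (hσn n) (h0n n) ha0 hat htT hb0 ((hbs.trans hsε).trans hε₀S)
            (fun u hu => hmemγ u ⟨hu.1, hu.2.trans htε⟩)
            (fun u hu => hmemσ u ⟨hu.1, (hu.2.trans hbs).trans hsε⟩)
        exact step2.trans step1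
      · exact ⟨Real.pi, Filter.eventually_map.2
          (Filter.Eventually.of_forall fun _ => compAngle_le_pi _ _ _)⟩
    have heq : compAngle (γ 0) (γ ts.1) (σ ts.2)
        = Filter.liminf (fun n => compAngle (γn n 0) (γn n ts.1) (σn n ts.2)) atTop :=
      (hfn.liminf_eq).symm
    rw [heq]
    refine Filter.liminf_le_liminf hev ?_ ?_
    · exact ⟨0, Filter.eventually_map.2
        (Filter.Eventually.of_forall fun _ => compAngle_nonneg _ _ _)⟩
    · exact Filter.IsBoundedUnder.isCoboundedUnder_ge ⟨Real.pi, Filter.eventually_map.2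
        (Filter.Eventually.of_forall fun n => upperAngle_le_pi _ _)⟩
end
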